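/- Existence criterion for nondegenerate Euclidean tetrahedra. Let l_{ab} ≥ 0 for 1 ≤ a < b ≤ 4. There exist affinely independent points v₁,…,v₄ ∈ ℝ³ with dist(v_a,v_b) = l_{ab} for all a < b if and only if: (i) each of the four faces (a,b,c) satisfies the triangle inequalities among l_{ab}, l_{ac}, l_{bc}, and (ii) −det M > 0, where M is the 5×5 bordered Cayley–Menger matrix of the six lengths l_{ab}. -/

import Mathlib

open Real

/-- The bordered Cayley–Menger matrix of a family of "distances" `d i j` on `m` points:
the `(m+1) × (m+1)` matrix with rows and columns indexed by `{∗} ∪ {0,…,m−1}`,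
with `M_{∗∗} = 0`, `M_{∗i} = M_{i∗} = 1`, `M_{ii} = 0` and `M_{ij} = −½ d(i,j)²`
for `i ≠ j`. -/
noncomputable def cayleyMenger {m : ℕ} (d : Fin m → Fin m → ℝ) :
    Matrix (Option (Fin m)) (Option (Fin m)) ℝ :=
  Matrix.of fun i j =>
    match i, j with
    | none, none => 0
    | none, some _ => 1
    | some _, none => 1
    | some a, some b => if a = b then 0 else -(1/2) * d a b ^ 2

/-- Explicit equiv between `Fin 5` and `Option (Fin 4)`. -/
def cmE5 : Fin 5 ≃ Option (Fin 4) :=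
  ⟨![none, some 0, some 1, some 2, some 3], fun o => o.elim 0 Fin.succ,
   by decide, by decide⟩

set_option maxHeartbeats 1000000 in
/-- The bordered Cayley–Menger determinant of a tetrahedron equals the determinant of
the associated 3×3 "Gram" matrix obtained by polarization. -/
lemma cm_det (l12 l13 l14 l23 l24 l34 : ℝ) :
    -(cayleyMenger (fun i j =>
        (!![0, l12, l13, l14;
            l12, 0, l23, l24;
            l13, l23, 0, l34;
            l14, l24, l34, 0] : Matrix (Fin 4) (Fin 4) ℝ) i j)).det =
    (!![l12^2, (l12^2+l13^2-l23^2)/2, (l12^2+l14^2-l24^2)/2;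
        (l12^2+l13^2-l23^2)/2, l13^2, (l13^2+l14^2-l34^2)/2;
        (l12^2+l14^2-l24^2)/2, (l13^2+l14^2-l34^2)/2, l14^2] : Matrix (Fin 3) (Fin 3) ℝ).det := by
  rw [← Matrix.det_submatrix_equiv_self cmE5]
  have h : (cayleyMenger (fun i j =>
        (!![0, l12, l13, l14;
            l12, 0, l23, l24;
            l13, l23, 0, l34;
            l14, l24, l34, 0] : Matrix (Fin 4) (Fin 4) ℝ) i j)).submatrix cmE5 cmE5
      = !![0,1,1,1,1;
           1,0,-(1/2)*l12^2,-(1/2)*l13^2,-(1/2)*l14^2;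
           1,-(1/2)*l12^2,0,-(1/2)*l23^2,-(1/2)*l24^2;
           1,-(1/2)*l13^2,-(1/2)*l23^2,0,-(1/2)*l34^2;
           1,-(1/2)*l14^2,-(1/2)*l24^2,-(1/2)*l34^2,0] := by
    ext i j
    fin_cases i <;> fin_cases j <;>
      simp [cayleyMenger, cmE5, Matrix.submatrix_apply, Matrix.vecHead, Matrix.vecTail]
  rw [h, Matrix.det_fin_three]
  simp only [Matrix.det_succ_row_zero, Fin.sum_univ_succ, Matrix.submatrix_apply,
    Matrix.submatrix_submatrix, Function.comp_apply, Fin.zero_succAbove, Fin.succ_succAbove_zero,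
    Fin.succ_succAbove_succ, Matrix.det_unique, Fin.default_eq_zero, Finset.univ_unique,
    Finset.sum_singleton, Fin.sum_univ_zero, Matrix.cons_val_zero, Matrix.cons_val_succ,
    Matrix.head_cons, Fin.val_zero, Fin.val_succ, Matrix.cons_val', Matrix.cons_val_fin_one,
    Matrix.head_fin_const]
  norm_num [Matrix.vecHead, Matrix.vecTail]
  simp
  ring

/-- Application of a finite sum of Euclidean vectors at a coordinate. -/
lemma cmSumApply (w : Fin 3 → ℝ) (u : Fin 3 → EuclideanSpace ℝ (Fin 3)) (i : Fin 3) :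
    (∑ a, w a • u a) i = ∑ a, w a * u a i := by
  have h := map_sum (EuclideanSpace.proj (𝕜 := ℝ) i) (fun a => w a • u a) Finset.univ
  simp only [map_smul, PiLp.proj_apply, smul_eq_mul] at h
  exact h

/-- Affine independence of four points in terms of linear independence of the three
difference vectors based at the zeroth point. -/
lemma cmAffineIff (w : Fin 4 → EuclideanSpace ℝ (Fin 3)) :
    AffineIndependent ℝ w ↔ LinearIndependent ℝ (fun i : Fin 3 => w i.succ - w 0) := by
  rw [affineIndependent_iff_linearIndependent_vsub ℝ w 0]
  exact (linearIndependent_equiv'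
    (⟨fun i => ⟨i.succ, Fin.succ_ne_zero i⟩, fun x => x.1.pred x.2,
      fun i => by simp, fun x => Subtype.ext (Fin.succ_pred x.1 x.2)⟩ :
      Fin 3 ≃ {x : Fin 4 // x ≠ 0})
    (f := fun i : {x : Fin 4 // x ≠ 0} => w ↑i -ᵥ w 0)
    (g := fun i : Fin 3 => w i.succ - w 0)
    (funext fun i => rfl)).symm

lemma cmDistSq (x y : EuclideanSpace ℝ (Fin 3)) :
    dist x y ^ 2 = (x 0 - y 0)^2 + (x 1 - y 1)^2 + (x 2 - y 2)^2 := by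
  rw [EuclideanSpace.dist_eq, Real.sq_sqrt (by positivity)]
  simp [Fin.sum_univ_three, Real.dist_eq, sq_abs]

lemma cmDistOfSq {x y : EuclideanSpace ℝ (Fin 3)} {l : ℝ} (hl : 0 ≤ l)
    (h : dist x y ^ 2 = l ^ 2) : dist x y = l := by
  rw [← Real.sqrt_sq (dist_nonneg (x := x) (y := y)), h, Real.sqrt_sq hl]

set_option maxHeartbeats 4000000 in
/-- **Existence criterion for nondegenerate Euclidean tetrahedra.** For `l_{ab} ≥ 0`,
there exist affinely independent points `v₁, …, v₄ ∈ ℝ³` with `dist(v_a, v_b) = l_{ab}`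
if and only if each of the four faces satisfies the triangle inequalities and
`−det M > 0`, where `M` is the `5 × 5` bordered Cayley–Menger matrix of the six
lengths. -/
theorem euclidean_tetrahedron_exists_iff (l12 l13 l14 l23 l24 l34 : ℝ)
    (h12 : 0 ≤ l12) (h13 : 0 ≤ l13) (h14 : 0 ≤ l14)
    (h23 : 0 ≤ l23) (h24 : 0 ≤ l24) (h34 : 0 ≤ l34) :
    (∃ v : Fin 4 → EuclideanSpace ℝ (Fin 3),
      AffineIndependent ℝ v ∧
      dist (v 0) (v 1) = l12 ∧ dist (v 0) (v 2) = l13 ∧ dist (v 0) (v 3) = l14 ∧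
      dist (v 1) (v 2) = l23 ∧ dist (v 1) (v 3) = l24 ∧ dist (v 2) (v 3) = l34) ↔
    ((l12 ≤ l13 + l23 ∧ l13 ≤ l12 + l23 ∧ l23 ≤ l12 + l13) ∧
     (l12 ≤ l14 + l24 ∧ l14 ≤ l12 + l24 ∧ l24 ≤ l12 + l14) ∧
     (l13 ≤ l14 + l34 ∧ l14 ≤ l13 + l34 ∧ l34 ≤ l13 + l14) ∧
     (l23 ≤ l24 + l34 ∧ l24 ≤ l23 + l34 ∧ l34 ≤ l23 + l24) ∧
     0 < -(cayleyMenger (fun i j =>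
        (!![0, l12, l13, l14;
            l12, 0, l23, l24;
            l13, l23, 0, l34;
            l14, l24, l34, 0] : Matrix (Fin 4) (Fin 4) ℝ) i j)).det) := by
  constructor
  · rintro ⟨v, hvind, d12, d13, d14, d23, d24, d34⟩
    refine ⟨⟨?_, ?_, ?_⟩, ⟨?_, ?_, ?_⟩, ⟨?_, ?_, ?_⟩, ⟨?_, ?_, ?_⟩, ?_⟩
    · rw [← d12, ← d13, ← d23]; exact dist_triangle_right _ _ _
    · rw [← d12, ← d13, ← d23]; exact dist_triangle _ _ _
    · rw [← d12, ← d13, ← d23]; exact dist_triangle_left _ _ _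
    · rw [← d12, ← d14, ← d24]; exact dist_triangle_right _ _ _
    · rw [← d12, ← d14, ← d24]; exact dist_triangle _ _ _
    · rw [← d12, ← d14, ← d24]; exact dist_triangle_left _ _ _
    · rw [← d13, ← d14, ← d34]; exact dist_triangle_right _ _ _
    · rw [← d13, ← d14, ← d34]; exact dist_triangle _ _ _
    · rw [← d13, ← d14, ← d34]; exact dist_triangle_left _ _ _
    · rw [← d23, ← d24, ← d34]; exact dist_triangle_right _ _ _
    · rw [← d23, ← d24, ← d34]; exact dist_triangle _ _ _
    · rw [← d23, ← d24, ← d34]; exact dist_triangle_left _ _ _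
    · rw [cm_det]
      set u : Fin 3 → EuclideanSpace ℝ (Fin 3) := fun a => v a.succ - v 0 with hu
      have li : LinearIndependent ℝ u := (cmAffineIff v).mp hvind
      set A : Matrix (Fin 3) (Fin 3) ℝ := Matrix.of fun i a => u a i with hA
      have hdet : A.det ≠ 0 := by
        intro h0
        obtain ⟨g, hg, hAg⟩ := (Matrix.exists_mulVec_eq_zero_iff).2 h0
        apply hg
        have hz : ∑ a, g a • u a = 0 := by
          ext i
          have h1 : A.mulVec g i = 0 := by rw [hAg]; rfl
          rw [Matrix.mulVec, dotProduct] at h1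
          rw [cmSumApply]
          simpa [hA, mul_comm] using h1
        have := Fintype.linearIndependent_iff.mp li g hz
        funext a; exact this a
      have key : ∀ a b : Fin 4,
          (v a 0 - v b 0)^2 + (v a 1 - v b 1)^2 + (v a 2 - v b 2)^2 = dist (v a) (v b) ^ 2 :=
        fun a b => (cmDistSq (v a) (v b)).symm
      have hAij : ∀ (i j : Fin 3), (A.transpose * A) i j =
          ∑ k : Fin 3, (v i.succ k - v 0 k) * (v j.succ k - v 0 k) := by
        intro i j
        simp [Matrix.mul_apply, hA, hu, PiLp.sub_apply]
      have s0 : ((0:Fin 3)).succ = 1 := rfl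
      have s1 : ((1:Fin 3)).succ = 2 := rfl
      have s2 : ((2:Fin 3)).succ = 3 := rfl
      have h00 : (A.transpose * A) 0 0 = l12^2 := by
        rw [hAij, s0, ← d12, ← key 0 1, Fin.sum_univ_three]; ring
      have h11 : (A.transpose * A) 1 1 = l13^2 := by
        rw [hAij, s1, ← d13, ← key 0 2, Fin.sum_univ_three]; ring
      have h22 : (A.transpose * A) 2 2 = l14^2 := by
        rw [hAij, s2, ← d14, ← key 0 3, Fin.sum_univ_three]; ring
      have h01 : (A.transpose * A) 0 1 = (l12^2+l13^2-l23^2)/2 := by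
        rw [hAij, s0, s1, ← d12, ← d13, ← d23, ← key 0 1, ← key 0 2, ← key 1 2,
          Fin.sum_univ_three]; ring
      have h10 : (A.transpose * A) 1 0 = (l12^2+l13^2-l23^2)/2 := by
        rw [hAij, s0, s1, ← d12, ← d13, ← d23, ← key 0 1, ← key 0 2, ← key 1 2,
          Fin.sum_univ_three]; ring
      have h02 : (A.transpose * A) 0 2 = (l12^2+l14^2-l24^2)/2 := by
        rw [hAij, s0, s2, ← d12, ← d14, ← d24, ← key 0 1, ← key 0 3, ← key 1 3,
          Fin.sum_univ_three]; ring
      have h20 : (A.transpose * A) 2 0 = (l12^2+l14^2-l24^2)/2 := by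
        rw [hAij, s0, s2, ← d12, ← d14, ← d24, ← key 0 1, ← key 0 3, ← key 1 3,
          Fin.sum_univ_three]; ring
      have h12 : (A.transpose * A) 1 2 = (l13^2+l14^2-l34^2)/2 := by
        rw [hAij, s1, s2, ← d13, ← d14, ← d34, ← key 0 2, ← key 0 3, ← key 2 3,
          Fin.sum_univ_three]; ring
      have h21 : (A.transpose * A) 2 1 = (l13^2+l14^2-l34^2)/2 := by
        rw [hAij, s1, s2, ← d13, ← d14, ← d34, ← key 0 2, ← key 0 3, ← key 2 3,
          Fin.sum_univ_three]; ring
      have hG : (!![l12^2, (l12^2+l13^2-l23^2)/2, (l12^2+l14^2-l24^2)/2;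
          (l12^2+l13^2-l23^2)/2, l13^2, (l13^2+l14^2-l34^2)/2;
          (l12^2+l14^2-l24^2)/2, (l13^2+l14^2-l34^2)/2, l14^2] : Matrix (Fin 3) (Fin 3) ℝ)
          = A.transpose * A := by
        ext a b
        fin_cases a <;> fin_cases b <;>
          first
          | exact h00.symm | exact h01.symm | exact h02.symm
          | exact h10.symm | exact h11.symm | exact h12.symm
          | exact h20.symm | exact h21.symm | exact h22.symm
      rw [hG, Matrix.det_mul, Matrix.det_transpose]
      exact lt_of_le_of_ne (mul_self_nonneg _) (Ne.symm (mul_ne_zero hdet hdet))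
  · rintro ⟨⟨t1a, t1b, t1c⟩, ⟨t2a, t2b, t2c⟩, ⟨t3a, t3b, t3c⟩, ⟨t4a, t4b, t4c⟩, hdet⟩
    rw [cm_det, Matrix.det_fin_three] at hdet
    norm_num at hdet
    simp at hdet
    -- hdet is now an explicit polynomial inequality
    -- Step 1 : l12 > 0
    have ha : 0 < l12 := by
      rcases h12.eq_or_lt with h0 | h0
      · exfalso
        have hb : l13 = l23 := le_antisymm (by linarith) (by linarith)
        have hc : l14 = l24 := le_antisymm (by linarith) (by linarith)
        rw [← h0, hb, hc] at hdet
        linarith [hdet]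
      · exact h0
    -- abbreviations
    set g12 : ℝ := (l12^2 + l13^2 - l23^2)/2 with hg12
    set g13 : ℝ := (l12^2 + l14^2 - l24^2)/2 with hg13
    set g23 : ℝ := (l13^2 + l14^2 - l34^2)/2 with hg23
    have hm2nn : 0 ≤ l12^2*l13^2 - g12^2 := by
      nlinarith [mul_nonneg (mul_nonneg (mul_nonneg
        (by linarith : (0:ℝ) ≤ l12 + l13 + l23) (by linarith : (0:ℝ) ≤ -l12 + l13 + l23))
        (by linarith : (0:ℝ) ≤ l12 - l13 + l23)) (by linarith : (0:ℝ) ≤ l12 + l13 - l23)]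
    have hm13nn : 0 ≤ l12^2*l14^2 - g13^2 := by
      nlinarith [mul_nonneg (mul_nonneg (mul_nonneg
        (by linarith : (0:ℝ) ≤ l12 + l14 + l24) (by linarith : (0:ℝ) ≤ -l12 + l14 + l24))
        (by linarith : (0:ℝ) ≤ l12 - l14 + l24)) (by linarith : (0:ℝ) ≤ l12 + l14 - l24)]
    have hP : 0 < l12^2*l13^2*l14^2 + 2*g12*g13*g23 - l12^2*g23^2 - l13^2*g13^2 - l14^2*g12^2 := by
      linarith [hdet]
    have hprod : 0 < (l12^2*l13^2 - g12^2) * (l12^2*l14^2 - g13^2) := by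
      nlinarith [hP, sq_nonneg (l12^2*g23 - g12*g13), mul_pos (mul_pos ha ha) hP]
    have hm2 : 0 < l12^2*l13^2 - g12^2 := by
      rcases hm2nn.eq_or_lt with h0 | h0
      · exfalso; nlinarith [hprod]
      · exact h0
    -- coordinates
    set x2 : ℝ := g12 / l12 with hx2def
    set x3 : ℝ := g13 / l12 with hx3def
    have hx2 : x2 * l12 = g12 := by rw [hx2def]; field_simp
    have hx3 : x3 * l12 = g13 := by rw [hx3def]; field_simp
    have hS2 : 0 < l13^2 - x2^2 := by
      have h1 : l12^2 * (l13^2 - x2^2) = l12^2*l13^2 - g12^2 := by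
        rw [hx2def]; field_simp
      nlinarith [h1, mul_pos ha ha]
    set y2 : ℝ := Real.sqrt (l13^2 - x2^2) with hy2def
    have hy2pos : 0 < y2 := Real.sqrt_pos.mpr hS2
    have hy2sq : y2^2 = l13^2 - x2^2 := Real.sq_sqrt hS2.le
    set y3 : ℝ := (g23 - x2*x3) / y2 with hy3def
    have hy3 : y3 * y2 = g23 - x2*x3 := by rw [hy3def]; field_simp
    have hS3 : 0 < l14^2 - x3^2 - y3^2 := by
      have hkey : l12^2 * y2^2 * (l14^2 - x3^2 - y3^2) =
          l12^2*l13^2*l14^2 + 2*g12*g13*g23 - l12^2*g23^2 - l13^2*g13^2 - l14^2*g12^2 := by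
        linear_combination (-(l14^2)*(l12*x2 + g12) + 2*g23*l12*x3) * hx2 +
          (-(l13^2)*(l12*x3 + g13) + 2*g23*g12) * hx3 +
          (l12^2*(l14^2 - x3^2)) * hy2sq +
          (-(l12^2)*(y2*y3 + g23 - x2*x3)) * hy3
      have hre : l14^2 - x3^2 - y3^2 =
          (l12^2*l13^2*l14^2 + 2*g12*g13*g23 - l12^2*g23^2 - l13^2*g13^2 - l14^2*g12^2)
            / (l12^2 * y2^2) := by
        rw [eq_div_iff (mul_pos (pow_pos ha 2) (pow_pos hy2pos 2)).ne']
        linear_combination hkey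
      rw [hre]
      exact div_pos hP (mul_pos (pow_pos ha 2) (pow_pos hy2pos 2))
    set z3 : ℝ := Real.sqrt (l14^2 - x3^2 - y3^2) with hz3def
    have hz3pos : 0 < z3 := Real.sqrt_pos.mpr hS3
    have hz3sq : z3^2 = l14^2 - x3^2 - y3^2 := Real.sq_sqrt hS3.le
    -- the points
    set p : Fin 4 → EuclideanSpace ℝ (Fin 3) := fun i =>
      (WithLp.equiv 2 (Fin 3 → ℝ)).symm
        (![![0,0,0], ![l12,0,0], ![x2,y2,0], ![x3,y3,z3]] i) with hp
    have hpc : ∀ i j, p i j = (![![0,0,0], ![l12,0,0], ![x2,y2,0], ![x3,y3,z3]] i) j := by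
      intro i j; rw [hp]; rfl
    refine ⟨p, ?_, ?_, ?_, ?_, ?_, ?_, ?_⟩
    · rw [cmAffineIff]
      rw [Fintype.linearIndependent_iff]
      intro g hg
      have happ : ∀ j : Fin 3, ∑ a : Fin 3, g a * ((p a.succ - p 0) j) = 0 := by
        intro j
        rw [← cmSumApply, hg]
        rfl
      have hval : ∀ (a : Fin 3) (j : Fin 3),
          (p a.succ - p 0) j = (![![l12,0,0], ![x2,y2,0], ![x3,y3,z3]] a) j := by
        intro a j
        rw [PiLp.sub_apply, hpc, hpc]
        fin_cases a <;> fin_cases j <;> simp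
      have h2 := happ 2
      rw [Fin.sum_univ_three] at h2
      simp only [hval] at h2
      simp at h2
      have hg2 : g 2 = 0 := by
        rcases h2 with h | h
        · exact h
        · exact absurd h hz3pos.ne'
      have h1 := happ 1
      rw [Fin.sum_univ_three] at h1
      simp only [hval] at h1
      simp [hg2] at h1
      have hg1 : g 1 = 0 := by
        rcases h1 with h | h
        · exact h
        · exact absurd h hy2pos.ne'
      have h0 := happ 0
      rw [Fin.sum_univ_three] at h0
      simp only [hval] at h0
      simp [hg1, hg2] at h0
      have hg0 : g 0 = 0 := by
        rcases h0 with h | h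
        · exact h
        · exact absurd h ha.ne'
      intro i; fin_cases i <;> assumption
    · refine cmDistOfSq h12 ?_
      rw [cmDistSq]; simp only [hpc]; norm_num; simp
    · refine cmDistOfSq h13 ?_
      rw [cmDistSq]; simp only [hpc]; norm_num; simp
      linear_combination hy2sq
    · refine cmDistOfSq h14 ?_
      rw [cmDistSq]; simp only [hpc]; norm_num; simp
      linear_combination hz3sq
    · refine cmDistOfSq h23 ?_
      rw [cmDistSq]; simp only [hpc]; norm_num; simp
      linear_combination hy2sq - 2*hx2
    · refine cmDistOfSq h24 ?_
      rw [cmDistSq]; simp only [hpc]; norm_num; simp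
      linear_combination hz3sq - 2*hx3
    · refine cmDistOfSq h34 ?_
      rw [cmDistSq]; simp only [hpc]; norm_num; simp
      linear_combination hy2sq + hz3sq - 2*hy3
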